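/- Let L and E be normed spaces and suppose the algebraic tensor product L ⊗ E carries a seminorm making it a contractive left module over B(L) (i.e. ‖a · u‖ ≤ ‖a‖‖u‖ for all a ∈ B(L), u ∈ L ⊗ E, where a · (ξ ⊗ x) = a(ξ) ⊗ x). If moreover for every unit vector ξ ∈ L and every nonzero x ∈ E one has ‖ξ ⊗ x‖ > 0 (equivalently, the induced underlying seminorm on E is a norm), then the seminorm on L ⊗ E is a norm. -/

import Mathlib

open TensorProduct

/-- If an `L`-seminorm on `E` (a seminorm on `L ⊗ E` making it a contractive
left `B(L)`-module) induces a norm on `E` (elementary tensors with unit `ξ` and nonzero `x`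
have positive seminorm), then the seminorm on `L ⊗ E` is a norm. -/
theorem lSeminorm_isNorm_of_underlying_norm
    (L E : Type*) [NormedAddCommGroup L] [NormedSpace ℂ L] [Nontrivial L]
    [NormedAddCommGroup E] [NormedSpace ℂ E]
    (N : L ⊗[ℂ] E → ℝ)
    (hN0 : N 0 = 0)
    (hNadd : ∀ u v : L ⊗[ℂ] E, N (u + v) ≤ N u + N v)
    (hNsmul : ∀ (c : ℂ) (u : L ⊗[ℂ] E), N (c • u) = ‖c‖ * N u)
    (hcontr : ∀ (a : L →L[ℂ] L) (u : L ⊗[ℂ] E),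
      N (LinearMap.rTensor E (a : L →ₗ[ℂ] L) u) ≤ ‖a‖ * N u)
    (hund : ∀ (ξ : L) (x : E), ‖ξ‖ = 1 → x ≠ 0 → 0 < N (ξ ⊗ₜ[ℂ] x)) :
    ∀ u : L ⊗[ℂ] E, u ≠ 0 → 0 < N u := by
  intro u hu
  -- N u ≥ 0
  have hNneg : N (-u) = N u := by
    have := hNsmul (-1 : ℂ) u
    simpa using this
  have hNnonneg : 0 ≤ N u := by
    have h := hNadd u (-u)
    rw [add_neg_cancel, hN0, hNneg] at h
    linarith
  -- basis of E
  classical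
  let b := Module.Basis.ofVectorSpace ℂ E
  set ι := Module.Basis.ofVectorSpaceIndex ℂ E
  -- Φ : L ⊗ E ≃ₗ (ι →₀ L)
  let Φ : L ⊗[ℂ] E ≃ₗ[ℂ] (ι →₀ L) :=
    (LinearEquiv.lTensor L b.repr).trans (TensorProduct.finsuppScalarRight ℂ ℂ L ι)
  have hΦu : Φ u ≠ 0 := by
    simp only [ne_eq, LinearEquiv.map_eq_zero_iff]
    exact hu
  obtain ⟨i0, hi0⟩ : ∃ i, Φ u i ≠ 0 := by
    by_contra h
    push_neg at h
    exact hΦu (Finsupp.ext h)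
  set v : L := Φ u i0 with hv
  obtain ⟨f, hf1, hfv⟩ := exists_dual_vector ℂ v (norm_ne_zero_iff.mpr hi0)
  -- x := (f ⊗ id) u  viewed in E
  set x : E := TensorProduct.lid ℂ E
      (LinearMap.rTensor E (f : L →ₗ[ℂ] ℂ) u) with hx
  -- key commutation: b.repr x i = f (Φ u i), for all u, by tensor induction
  have key : ∀ w : L ⊗[ℂ] E, ∀ i : ι,
      b.repr (TensorProduct.lid ℂ E (LinearMap.rTensor E (f : L →ₗ[ℂ] ℂ) w)) i
        = f (Φ w i) := by
    intro w
    induction w using TensorProduct.induction_on with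
    | zero => intro i; simp [Φ]
    | tmul z y =>
        intro i
        simp only [LinearMap.rTensor_tmul, TensorProduct.lid_tmul, map_smul, Φ,
          LinearEquiv.trans_apply, LinearEquiv.lTensor_tmul,
          TensorProduct.finsuppScalarRight_apply_tmul_apply]
        simp [Finsupp.smul_apply, smul_eq_mul, mul_comm]
    | add w₁ w₂ h₁ h₂ =>
        intro i
        simp only [map_add, Finsupp.add_apply, h₁ i, h₂ i]
  have hx0 : x ≠ 0 := by
    intro h
    have : b.repr x i0 = 0 := by rw [h]; simp
    rw [hx, key u i0, ← hv, hfv] at this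
    exact hi0 (by simpa using this)
  -- unit vector ξ
  obtain ⟨z, hz⟩ := exists_ne (0 : L)
  set ξ : L := ‖z‖⁻¹ • z with hξ
  have hξ1 : ‖ξ‖ = 1 := by
    rw [hξ, norm_smul, norm_inv, norm_norm]
    field_simp [norm_ne_zero_iff.mpr hz]
  -- rank-one operator a = f(·) • ξ
  set a : L →L[ℂ] L := f.smulRight ξ with ha
  have hrT : ∀ w : L ⊗[ℂ] E, LinearMap.rTensor E (a : L →ₗ[ℂ] L) w
      = ξ ⊗ₜ[ℂ] (TensorProduct.lid ℂ E (LinearMap.rTensor E (f : L →ₗ[ℂ] ℂ) w)) := by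
    intro w
    induction w using TensorProduct.induction_on with
    | zero => simp
    | tmul z' y =>
        simp [ha, TensorProduct.smul_tmul, TensorProduct.tmul_smul]
    | add w₁ w₂ h₁ h₂ =>
        simp only [map_add, h₁, h₂, TensorProduct.tmul_add]
  have hpos := hund ξ x hξ1 hx0
  have hle := hcontr a u
  rw [hrT u, ← hx] at hle
  have : 0 < ‖a‖ * N u := lt_of_lt_of_le hpos hle
  rcases hNnonneg.lt_or_eq with h | h
  · exact h
  · exfalso; rw [← h, mul_zero] at this; exact lt_irrefl 0 this
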